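/- arXiv:1409.2618 — 5 statements merged into one kernel-verified Lean document; each statement's English description precedes it below -/
import Mathlib

section
/- Fix T > 0, x₀ ∈ ℝ and c > 0. For every continuously differentiable curve x : [0,T] → ℝ with x(0) = x₀ and x(T) = 0, one has ∫₀^T ((x'(t))² + c·x(t)²) dt ≥ √c · x₀² · coth(√c T). Moreover the hyperbolic curve x^{MH}(t) = x₀ · sinh(√c (T−t)) / sinh(√c T) satisfies the boundary conditions, is nonincreasing when x₀ ≥ 0, has selling rate −(x^{MH})'(t) = √c x₀ cosh(√c (T−t)) / sinh(√c T), and achieves ∫₀^T ((x^{MH})'(t))² + c·(x^{MH}(t))² dt = √c · x₀² · coth(√c T), so the infimum 𝓘^{MH}(T,x₀) of this cost equals √c x₀² coth(√c T). -/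
open Set intervalIntegral Real

theorem hyperbolic_optimal (T x₀ c : ℝ) (hT : 0 < T) (hc : 0 < c) :
    (∀ x x' : ℝ → ℝ, (∀ t ∈ Icc (0:ℝ) T, HasDerivAt x (x' t) t) →
        ContinuousOn x' (Icc 0 T) → x 0 = x₀ → x T = 0 →
        Real.sqrt c * x₀ ^ 2 * (Real.cosh (Real.sqrt c * T) / Real.sinh (Real.sqrt c * T))
          ≤ ∫ t in (0:ℝ)..T, ((x' t) ^ 2 + c * (x t) ^ 2)) ∧
    ((fun t : ℝ => x₀ * Real.sinh (Real.sqrt c * (T - t)) / Real.sinh (Real.sqrt c * T)) 0 = x₀) ∧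
    ((fun t : ℝ => x₀ * Real.sinh (Real.sqrt c * (T - t)) / Real.sinh (Real.sqrt c * T)) T = 0) ∧
    (0 ≤ x₀ → AntitoneOn
        (fun t : ℝ => x₀ * Real.sinh (Real.sqrt c * (T - t)) / Real.sinh (Real.sqrt c * T))
        (Icc 0 T)) ∧
    (∀ t : ℝ, HasDerivAt
        (fun t : ℝ => x₀ * Real.sinh (Real.sqrt c * (T - t)) / Real.sinh (Real.sqrt c * T))
        (-(Real.sqrt c * x₀ * Real.cosh (Real.sqrt c * (T - t)) / Real.sinh (Real.sqrt c * T))) t) ∧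
    ((∫ t in (0:ℝ)..T,
        ((Real.sqrt c * x₀ * Real.cosh (Real.sqrt c * (T - t)) / Real.sinh (Real.sqrt c * T)) ^ 2
          + c * (x₀ * Real.sinh (Real.sqrt c * (T - t)) / Real.sinh (Real.sqrt c * T)) ^ 2))
      = Real.sqrt c * x₀ ^ 2 * (Real.cosh (Real.sqrt c * T) / Real.sinh (Real.sqrt c * T))) ∧
    IsLeast {cost : ℝ | ∃ x x' : ℝ → ℝ, (∀ t ∈ Icc (0:ℝ) T, HasDerivAt x (x' t) t) ∧
        ContinuousOn x' (Icc 0 T) ∧ x 0 = x₀ ∧ x T = 0 ∧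
        cost = ∫ t in (0:ℝ)..T, ((x' t) ^ 2 + c * (x t) ^ 2)}
      (Real.sqrt c * x₀ ^ 2 * (Real.cosh (Real.sqrt c * T) / Real.sinh (Real.sqrt c * T))) := by
  have ha : 0 < Real.sqrt c := Real.sqrt_pos.mpr hc
  set a := Real.sqrt c with ha_def
  have ha2 : a ^ 2 = c := Real.sq_sqrt hc.le
  have hS : 0 < Real.sinh (a * T) := Real.sinh_pos_iff.mpr (by positivity)
  set X : ℝ → ℝ := fun t => x₀ * Real.sinh (a * (T - t)) / Real.sinh (a * T) with hX_def
  set V : ℝ → ℝ := fun t => -(a * x₀ * Real.cosh (a * (T - t)) / Real.sinh (a * T)) with hV_def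
  have hlin : ∀ t : ℝ, HasDerivAt (fun t : ℝ => a * (T - t)) (a * (0 - 1)) t := fun t =>
    ((hasDerivAt_const t T).sub (hasDerivAt_id t)).const_mul a
  have hXd : ∀ t : ℝ, HasDerivAt X (V t) t := by
    intro t
    have h2 := ((hlin t).sinh.const_mul x₀).div_const (Real.sinh (a * T))
    exact h2.congr_deriv (by simp only [hV_def]; ring)
  have hVd : ∀ t : ℝ, HasDerivAt V (c * X t) t := by
    intro t
    have h2 := (((hlin t).cosh.const_mul (a * x₀)).div_const (Real.sinh (a * T))).neg
    exact h2.congr_deriv (by rw [← ha2]; simp only [hX_def]; ring)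
  have hXc : Continuous X := by fun_prop
  have hVc : Continuous V := by fun_prop
  have hX0 : X 0 = x₀ := by
    simp only [hX_def, sub_zero]
    rw [mul_div_assoc, div_self hS.ne', mul_one]
  have hXT : X T = 0 := by simp [hX_def]
  have hcost : (∫ t in (0:ℝ)..T, (V t ^ 2 + c * X t ^ 2))
      = a * x₀ ^ 2 * (Real.cosh (a * T) / Real.sinh (a * T)) := by
    have hGd : ∀ t ∈ uIcc (0:ℝ) T, HasDerivAt (fun t => X t * V t) (V t ^ 2 + c * X t ^ 2) t := by
      intro t _
      have h := (hXd t).mul (hVd t)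
      exact h.congr_deriv (by ring)
    have hint : IntervalIntegrable (fun t => V t ^ 2 + c * X t ^ 2) MeasureTheory.volume 0 T :=
      Continuous.intervalIntegrable (by fun_prop) _ _
    rw [intervalIntegral.integral_eq_sub_of_hasDerivAt hGd hint, hXT, hX0]
    simp only [hV_def, sub_zero]
    field_simp
    ring
  have hcost' : (∫ t in (0:ℝ)..T,
      ((a * x₀ * Real.cosh (a * (T - t)) / Real.sinh (a * T)) ^ 2
        + c * (x₀ * Real.sinh (a * (T - t)) / Real.sinh (a * T)) ^ 2))
      = a * x₀ ^ 2 * (Real.cosh (a * T) / Real.sinh (a * T)) := by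
    rw [← hcost]
    apply intervalIntegral.integral_congr
    intro t _
    simp [hV_def, hX_def]
  have lower : ∀ x x' : ℝ → ℝ, (∀ t ∈ Icc (0:ℝ) T, HasDerivAt x (x' t) t) →
      ContinuousOn x' (Icc 0 T) → x 0 = x₀ → x T = 0 →
      a * x₀ ^ 2 * (Real.cosh (a * T) / Real.sinh (a * T))
        ≤ ∫ t in (0:ℝ)..T, (x' t ^ 2 + c * x t ^ 2) := by
    intro x x' hderiv hcont hx0 hxT
    have huIcc : uIcc (0:ℝ) T = Icc 0 T := uIcc_of_le hT.le
    have hxcont : ContinuousOn x (Icc 0 T) := fun t ht =>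
      (hderiv t ht).continuousAt.continuousWithinAt
    have hi2 : IntervalIntegrable (fun t => V t ^ 2 + c * X t ^ 2) MeasureTheory.volume 0 T :=
      Continuous.intervalIntegrable (by fun_prop) _ _
    have hi3 : IntervalIntegrable (fun t => (x' t - V t) ^ 2 + c * (x t - X t) ^ 2)
        MeasureTheory.volume 0 T := by
      apply ContinuousOn.intervalIntegrable
      rw [huIcc]
      exact ((hcont.sub hVc.continuousOn).pow 2).add
        (continuousOn_const.mul ((hxcont.sub hXc.continuousOn).pow 2))
    have hi4 : IntervalIntegrable (fun t => 2 * (c * X t * (x t - X t) + V t * (x' t - V t)))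
        MeasureTheory.volume 0 T := by
      apply ContinuousOn.intervalIntegrable
      rw [huIcc]
      apply continuousOn_const.mul
      exact ((continuousOn_const.mul hXc.continuousOn).mul (hxcont.sub hXc.continuousOn)).add
        (hVc.continuousOn.mul (hcont.sub hVc.continuousOn))
    have hcross : (∫ t in (0:ℝ)..T, (c * X t * (x t - X t) + V t * (x' t - V t))) = 0 := by
      have hGd : ∀ t ∈ uIcc (0:ℝ) T, HasDerivAt (fun t => V t * (x t - X t))
          (c * X t * (x t - X t) + V t * (x' t - V t)) t := by
        intro t ht
        rw [huIcc] at ht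
        have h := (hVd t).mul ((hderiv t ht).sub (hXd t))
        exact h
      have hint : IntervalIntegrable (fun t => c * X t * (x t - X t) + V t * (x' t - V t))
          MeasureTheory.volume 0 T := by
        apply ContinuousOn.intervalIntegrable
        rw [huIcc]
        exact ((continuousOn_const.mul hXc.continuousOn).mul (hxcont.sub hXc.continuousOn)).add
          (hVc.continuousOn.mul (hcont.sub hVc.continuousOn))
      rw [intervalIntegral.integral_eq_sub_of_hasDerivAt hGd hint, hxT, hXT, hx0, hX0]
      ring
    have split : (∫ t in (0:ℝ)..T, (x' t ^ 2 + c * x t ^ 2))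
        = (∫ t in (0:ℝ)..T, (V t ^ 2 + c * X t ^ 2))
          + ((∫ t in (0:ℝ)..T, ((x' t - V t) ^ 2 + c * (x t - X t) ^ 2))
            + (∫ t in (0:ℝ)..T, 2 * (c * X t * (x t - X t) + V t * (x' t - V t)))) := by
      rw [← intervalIntegral.integral_add hi3 hi4, ← intervalIntegral.integral_add hi2 (hi3.add hi4)]
      apply intervalIntegral.integral_congr
      intro t _
      ring
    have hnn : 0 ≤ ∫ t in (0:ℝ)..T, ((x' t - V t) ^ 2 + c * (x t - X t) ^ 2) := by
      apply intervalIntegral.integral_nonneg hT.le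
      intro t _
      positivity
    have h2c : (∫ t in (0:ℝ)..T, 2 * (c * X t * (x t - X t) + V t * (x' t - V t))) = 0 := by
      rw [intervalIntegral.integral_const_mul, hcross, mul_zero]
    rw [split, hcost, h2c]
    linarith
  refine ⟨lower, hX0, hXT, ?_, hXd, hcost', ?_⟩
  · intro hx₀ t₁ h₁ t₂ h₂ h12
    have hs : Real.sinh (a * (T - t₂)) ≤ Real.sinh (a * (T - t₁)) := by
      rw [Real.sinh_le_sinh]
      have := h12
      nlinarith
    exact (div_le_div_iff_of_pos_right hS).mpr (mul_le_mul_of_nonneg_left hs hx₀)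
  · constructor
    · exact ⟨X, V, fun t _ => hXd t, hVc.continuousOn, hX0, hXT, hcost.symm⟩
    · rintro cost ⟨x, x', h1, h2, h3, h4, rfl⟩
      exact lower x x' h1 h2 h3 h4
end

section
/- Fix x₀ > 0, c > 0 and T > 0, and set T̂ = min(T, 2√(x₀/c)). Define the curve x^{MQ}(t) = (c t²/4 − t(c T̂/4 + x₀/T̂) + x₀) for t ∈ [0, T̂] and x^{MQ}(t) = 0 for t ∈ [T̂, T]. Then x^{MQ} is continuously differentiable on [0,T], nonincreasing, with x^{MQ}(0) = x₀ and x^{MQ}(T) = 0, and for every nonincreasing continuously differentiable curve x : [0,T] → ℝ with x(0) = x₀ and x(T) = 0 one has ∫₀^T ((x'(t))² + c·x(t)) dt ≥ −c² T̂³/48 + c T̂ x₀/2 + x₀²/T̂, with equality for x = x^{MQ}. In particular, when T > 2√(x₀/c) the optimal execution ends strictly before the terminal time T. -/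
open Set intervalIntegral

set_option maxHeartbeats 1000000 in
theorem quadratic_case_optimal (x₀ c T : ℝ) (hx₀ : 0 < x₀) (hc : 0 < c) (hT : 0 < T)
    (That : ℝ) (hThat : That = min T (2 * Real.sqrt (x₀ / c)))
    (xMQ : ℝ → ℝ)
    (hxMQ : ∀ t : ℝ, xMQ t =
      if t ≤ That then c * t ^ 2 / 4 - t * (c * That / 4 + x₀ / That) + x₀ else 0) :
    ContDiffOn ℝ 1 xMQ (Icc 0 T) ∧
    AntitoneOn xMQ (Icc 0 T) ∧
    xMQ 0 = x₀ ∧ xMQ T = 0 ∧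
    (∀ x x' : ℝ → ℝ, (∀ t ∈ Icc (0:ℝ) T, HasDerivAt x (x' t) t) →
        ContinuousOn x' (Icc 0 T) → AntitoneOn x (Icc 0 T) → x 0 = x₀ → x T = 0 →
        -c ^ 2 * That ^ 3 / 48 + c * That * x₀ / 2 + x₀ ^ 2 / That
          ≤ ∫ t in (0:ℝ)..T, ((x' t) ^ 2 + c * x t)) ∧
    ((∫ t in (0:ℝ)..T, ((deriv xMQ t) ^ 2 + c * xMQ t))
      = -c ^ 2 * That ^ 3 / 48 + c * That * x₀ / 2 + x₀ ^ 2 / That) ∧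
    (2 * Real.sqrt (x₀ / c) < T → That < T ∧ ∀ t ∈ Icc That T, xMQ t = 0) := by
  have hxc : (0:ℝ) ≤ x₀ / c := le_of_lt (div_pos hx₀ hc)
  have hsq : (2 * Real.sqrt (x₀ / c)) ^ 2 = 4 * (x₀ / c) := by
    rw [mul_pow, Real.sq_sqrt hxc]; ring
  have hsqrtpos : 0 < 2 * Real.sqrt (x₀ / c) := by
    have := Real.sqrt_pos.mpr (div_pos hx₀ hc)
    linarith
  have hT0 : 0 < That := by rw [hThat]; exact lt_min hT hsqrtpos
  have hT0' : That ≠ 0 := ne_of_gt hT0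
  have hTle : That ≤ T := hThat ▸ min_le_left _ _
  have hcT2 : c * That ^ 2 ≤ 4 * x₀ := by
    have h1 : That ≤ 2 * Real.sqrt (x₀ / c) := hThat ▸ min_le_right _ _
    have h2 : That ^ 2 ≤ (2 * Real.sqrt (x₀ / c)) ^ 2 := by nlinarith
    rw [hsq] at h2
    have h3 : c * (4 * (x₀ / c)) = 4 * x₀ := by field_simp
    nlinarith
  have hkey : That < T → c * That ^ 2 = 4 * x₀ := by
    intro h
    have h2 : That = 2 * Real.sqrt (x₀ / c) := by
      rcases le_total T (2 * Real.sqrt (x₀ / c)) with h' | h'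
      · exfalso; rw [hThat, min_eq_left h'] at h; exact lt_irrefl _ h
      · rw [hThat, min_eq_right h']
    rw [h2, hsq]; field_simp
  set a : ℝ := c * That / 4 + x₀ / That with ha_def
  have hqThat : c * That ^ 2 / 4 - That * a + x₀ = 0 := by
    rw [ha_def]; field_simp; ring
  have haux : c * That / 2 ≤ a := by
    rw [ha_def]
    have : c * That / 4 ≤ x₀ / That := by
      rw [div_le_div_iff₀ (by norm_num) hT0]; nlinarith
    linarith
  -- case That < T helpers
  have hCase2 : That < T →
      (∀ t, xMQ t = c / 4 * (min t That - That) ^ 2) ∧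
      (∀ t, HasDerivAt xMQ (c / 2 * (min t That - That)) t) := by
    intro hLt
    have hc4 : c * That ^ 2 = 4 * x₀ := hkey hLt
    have haa : a = c * That / 2 := by
      rw [ha_def]
      have : x₀ / That = c * That / 4 := by
        rw [div_eq_div_iff hT0' (by norm_num)]; nlinarith
      rw [this]; ring
    have hxg : ∀ t, xMQ t = c / 4 * (min t That - That) ^ 2 := by
      intro t
      rw [hxMQ]
      split_ifs with h
      · rw [min_eq_left h, haa]; nlinarith
      · push_neg at h
        rw [min_eq_right h.le]; simp
    refine ⟨hxg, ?_⟩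
    have hfun : xMQ = fun t => c / 4 * (min t That - That) ^ 2 := funext hxg
    intro t
    rw [hfun]
    rcases lt_trichotomy t That with h | h | h
    · have hpoly : HasDerivAt (fun s : ℝ => c / 4 * (s - That) ^ 2)
          (c / 2 * (t - That)) t := by
        have h1 : HasDerivAt (fun s : ℝ => s - That) 1 t :=
          (hasDerivAt_id t).sub_const That
        have h2 := (h1.pow 2).const_mul (c / 4)
        exact h2.congr_deriv (by ring)
      have hev : (fun s : ℝ => c / 4 * (min s That - That) ^ 2)
          =ᶠ[nhds t] (fun s : ℝ => c / 4 * (s - That) ^ 2) := by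
        filter_upwards [Iio_mem_nhds h] with s hs
        rw [min_eq_left (le_of_lt hs)]
      rw [min_eq_left h.le]
      exact hpoly.congr_of_eventuallyEq hev
    · subst h
      rw [min_self, sub_self, mul_zero]
      rw [hasDerivAt_iff_isLittleO]
      have key : (fun s : ℝ => c / 4 * (min s t - t) ^ 2) =o[nhds t]
          (fun s : ℝ => s - t) := by
        rw [Asymptotics.isLittleO_iff]
        intro ε hε
        filter_upwards [eventually_abs_sub_lt t (show (0:ℝ) < 4 * ε / c by positivity)]
          with s hs
        have hs' : c * |s - t| < 4 * ε := by
          rw [lt_div_iff₀ hc] at hs; linarith [hs]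
        have hm : |min s t - t| ≤ |s - t| := by
          rcases le_total s t with h | h
          · rw [min_eq_left h]
          · rw [min_eq_right h]; simp [abs_nonneg]
        have h1 : ‖c / 4 * (min s t - t) ^ 2‖ = c / 4 * |min s t - t| ^ 2 := by
          rw [Real.norm_eq_abs, abs_mul, abs_pow,
            abs_of_nonneg (by positivity : (0:ℝ) ≤ c / 4)]
        rw [h1, Real.norm_eq_abs]
        nlinarith [mul_le_mul hm hm (abs_nonneg (min s t - t)) (abs_nonneg (s - t)),
          mul_le_mul_of_nonneg_right hs'.le (abs_nonneg (s - t)), abs_nonneg (s - t), hc.le]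
      simpa using key
    · have hev : (fun s : ℝ => c / 4 * (min s That - That) ^ 2)
          =ᶠ[nhds t] (fun _ : ℝ => (0:ℝ)) := by
        filter_upwards [Ioi_mem_nhds h] with s hs
        rw [min_eq_right (le_of_lt hs), sub_self]; ring
      rw [min_eq_right h.le, sub_self, mul_zero]
      exact (hasDerivAt_const t 0).congr_of_eventuallyEq hev
  -- helpers for the case That = T
  have hEqOnq : That = T → ∀ t ∈ Icc (0:ℝ) T, xMQ t = c * t ^ 2 / 4 - t * a + x₀ := by
    intro hEq t ht
    rw [hxMQ, if_pos (hEq ▸ ht.2)]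
  have hqder : ∀ t : ℝ, HasDerivAt (fun s => c * s ^ 2 / 4 - s * a + x₀)
      (c * t / 2 - a) t := by
    intro t
    have h1 : HasDerivAt (fun s : ℝ => c * s ^ 2 / 4) (c * t / 2) t := by
      have := ((hasDerivAt_pow 2 t).const_mul c).div_const 4
      exact this.congr_deriv (by ring)
    have h2 : HasDerivAt (fun s : ℝ => s * a) a t := by
      simpa using (hasDerivAt_id t).mul_const a
    simpa using (h1.sub h2).add_const x₀
  refine ⟨?_, ?_, ?_, ?_, ?_, ?_, ?_⟩
  · -- ContDiffOn
    rcases eq_or_lt_of_le hTle with hEq | hLt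
    · have hpoly : ContDiff ℝ 1 (fun t : ℝ => c * t ^ 2 / 4 - t * a + x₀) := by
        have h1 : ContDiff ℝ 1 (fun t : ℝ => c * t ^ 2 / 4) :=
          (contDiff_const.mul (contDiff_id.pow 2)).div_const 4
        exact (h1.sub (contDiff_id.mul contDiff_const)).add contDiff_const
      exact hpoly.contDiffOn.congr (hEqOnq hEq)
    · obtain ⟨hxg, hder⟩ := hCase2 hLt
      have hdiff : Differentiable ℝ xMQ := fun t => (hder t).differentiableAt
      have hderiv_eq : deriv xMQ = fun t => c / 2 * (min t That - That) :=
        funext fun t => (hder t).deriv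
      have : ContDiff ℝ 1 xMQ := by
        rw [contDiff_one_iff_deriv]
        refine ⟨hdiff, ?_⟩
        rw [hderiv_eq]
        exact continuous_const.mul ((continuous_id.min continuous_const).sub continuous_const)
      exact this.contDiffOn
  · -- AntitoneOn
    rcases eq_or_lt_of_le hTle with hEq | hLt
    · have hanti : AntitoneOn (fun t : ℝ => c * t ^ 2 / 4 - t * a + x₀) (Icc 0 T) := by
        apply antitoneOn_of_deriv_nonpos (convex_Icc 0 T)
        · exact (Continuous.continuousOn
            ((((continuous_const.mul (continuous_pow 2)).div_const 4).sub
              (continuous_id.mul continuous_const)).add continuous_const))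
        · intro s _; exact (hqder s).differentiableAt.differentiableWithinAt
        · intro s hs
          rw [(hqder s).deriv]
          rw [interior_Icc] at hs
          have hsT : s < That := hEq ▸ hs.2
          nlinarith [haux]
      intro s hs t ht hst
      rw [hEqOnq hEq s hs, hEqOnq hEq t ht]
      exact hanti hs ht hst
    · obtain ⟨hxg, hder⟩ := hCase2 hLt
      have hdiff : Differentiable ℝ xMQ := fun t => (hder t).differentiableAt
      apply antitoneOn_of_deriv_nonpos (convex_Icc 0 T) hdiff.continuous.continuousOn
        hdiff.differentiableOn
      intro s _
      rw [(hder s).deriv]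
      have h1 : min s That - That ≤ 0 := sub_nonpos.mpr (min_le_right _ _)
      exact mul_nonpos_of_nonneg_of_nonpos (by positivity) h1
  · -- xMQ 0 = x₀
    rw [hxMQ 0, if_pos hT0.le]; ring
  · -- xMQ T = 0
    rw [hxMQ T]
    split_ifs with h
    · have hTT : T = That := le_antisymm h hTle
      rw [hTT]; linarith [hqThat]
    · rfl
  · -- main inequality
    intro x x' hx hx'c hanti2 hx0T hxTT
    have hxcont : ContinuousOn x (Icc 0 T) := fun t ht =>
      (hx t ht).continuousAt.continuousWithinAt
    have hxnn : ∀ t ∈ Icc (0:ℝ) T, 0 ≤ x t := by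
      intro t ht
      have := hanti2 ht (right_mem_Icc.mpr hT.le) ht.2
      rwa [hxTT] at this
    have hsub1 : Icc (0:ℝ) That ⊆ Icc 0 T := Icc_subset_Icc le_rfl hTle
    have hsub2 : Icc That T ⊆ Icc (0:ℝ) T := Icc_subset_Icc hT0.le le_rfl
    have hfc : ContinuousOn (fun t => x' t ^ 2 + c * x t) (Icc (0:ℝ) T) :=
      (hx'c.pow 2).add (continuousOn_const.mul hxcont)
    have hint1 : IntervalIntegrable (fun t => x' t ^ 2 + c * x t)
        MeasureTheory.volume 0 That := by
      apply ContinuousOn.intervalIntegrable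
      rw [uIcc_of_le hT0.le]; exact hfc.mono hsub1
    have hint2 : IntervalIntegrable (fun t => x' t ^ 2 + c * x t)
        MeasureTheory.volume That T := by
      apply ContinuousOn.intervalIntegrable
      rw [uIcc_of_le hTle]; exact hfc.mono hsub2
    have hsplit := integral_add_adjacent_intervals hint1 hint2
    have h2 : 0 ≤ ∫ t in That..T, (x' t ^ 2 + c * x t) := by
      apply integral_nonneg hTle
      intro u hu
      exact add_nonneg (sq_nonneg _) (mul_nonneg hc.le (hxnn u (hsub2 hu)))
    have hP1 : Continuous (fun t : ℝ => c * t / 2 - a) :=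
      ((continuous_const.mul continuous_id).div_const 2).sub continuous_const
    have hgc : ContinuousOn
        (fun t => 2 * (c * t / 2 - a) * x' t + c * x t - (c * t / 2 - a) ^ 2)
        (Icc (0:ℝ) T) :=
      (((continuous_const.mul hP1).continuousOn.mul hx'c).add
        (continuousOn_const.mul hxcont)).sub (hP1.pow 2).continuousOn
    have hintg : IntervalIntegrable
        (fun t => 2 * (c * t / 2 - a) * x' t + c * x t - (c * t / 2 - a) ^ 2)
        MeasureTheory.volume 0 That := by
      apply ContinuousOn.intervalIntegrable
      rw [uIcc_of_le hT0.le]; exact hgc.mono hsub1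
    have h3 : (∫ t in (0:ℝ)..That,
          (2 * (c * t / 2 - a) * x' t + c * x t - (c * t / 2 - a) ^ 2))
        ≤ ∫ t in (0:ℝ)..That, (x' t ^ 2 + c * x t) := by
      apply integral_mono_on hT0.le hintg hint1
      intro t _
      nlinarith [sq_nonneg (x' t - (c * t / 2 - a))]
    have hH : ∀ t ∈ uIcc (0:ℝ) That, HasDerivAt
        (fun s => (c * s - 2 * a) * x s - 2 / (3 * c) * (c * s / 2 - a) ^ 3)
        (2 * (c * t / 2 - a) * x' t + c * x t - (c * t / 2 - a) ^ 2) t := by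
      intro t ht
      rw [uIcc_of_le hT0.le] at ht
      have h1 : HasDerivAt (fun s : ℝ => c * s - 2 * a) c t := by
        simpa using ((hasDerivAt_id t).const_mul c).sub_const (2 * a)
      have h2' := h1.mul (hx t (hsub1 ht))
      have h3' : HasDerivAt (fun s : ℝ => c * s / 2 - a) (c / 2) t := by
        simpa using (((hasDerivAt_id t).const_mul c).div_const 2).sub_const a
      have h4' := (h3'.pow 3).const_mul (2 / (3 * c))
      have h5' := h2'.sub h4'
      refine h5'.congr_deriv ?_
      field_simp
      ring
    have h4 : (∫ t in (0:ℝ)..That,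
          (2 * (c * t / 2 - a) * x' t + c * x t - (c * t / 2 - a) ^ 2))
        = ((c * That - 2 * a) * x That - 2 / (3 * c) * (c * That / 2 - a) ^ 3)
          - ((c * 0 - 2 * a) * x 0 - 2 / (3 * c) * (c * 0 / 2 - a) ^ 3) :=
      integral_eq_sub_of_hasDerivAt hH hintg
    have hbd : (c * That - 2 * a) * x That = 0 := by
      rcases eq_or_lt_of_le hTle with hEq | hLt
      · rw [hEq, hxTT, mul_zero]
      · have hc4 := hkey hLt
        have hz : c * That - 2 * a = 0 := by
          rw [ha_def]; field_simp; nlinarith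
        rw [hz, zero_mul]
    have hVal : ((c * That - 2 * a) * x That - 2 / (3 * c) * (c * That / 2 - a) ^ 3)
          - ((c * 0 - 2 * a) * x 0 - 2 / (3 * c) * (c * 0 / 2 - a) ^ 3)
        = -c ^ 2 * That ^ 3 / 48 + c * That * x₀ / 2 + x₀ ^ 2 / That := by
      rw [hbd, hx0T, ha_def]
      field_simp
      ring
    have h5 := h4.trans hVal
    linarith [hsplit, h2, h3, h5]
  · -- equality for xMQ
    have hae : ∀ᵐ t : ℝ, t ≠ That := by
      rw [MeasureTheory.ae_iff]
      simp only [ne_eq, not_not, Set.setOf_eq_eq_singleton]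
      exact MeasureTheory.measure_singleton That
    have hderq : ∀ t : ℝ, t < That →
        deriv xMQ t = c * t / 2 - a ∧ xMQ t = c * t ^ 2 / 4 - t * a + x₀ := by
      intro t htl
      have hev : xMQ =ᶠ[nhds t] (fun s => c * s ^ 2 / 4 - s * a + x₀) := by
        filter_upwards [Iio_mem_nhds htl] with s hs
        rw [hxMQ, if_pos (le_of_lt hs)]
      exact ⟨by rw [hev.deriv_eq, (hqder t).deriv], by rw [hxMQ, if_pos htl.le]⟩
    have hG : ∀ᵐ t : ℝ, t ∈ uIoc (0:ℝ) That →
        (deriv xMQ t) ^ 2 + c * xMQ t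
          = (c * t / 2 - a) ^ 2 + c * (c * t ^ 2 / 4 - t * a + x₀) := by
      filter_upwards [hae] with t hne ht
      rw [uIoc_of_le hT0.le] at ht
      have htl : t < That := lt_of_le_of_ne ht.2 hne
      rw [(hderq t htl).1, (hderq t htl).2]
    have hGint : (∫ t in (0:ℝ)..That,
          ((c * t / 2 - a) ^ 2 + c * (c * t ^ 2 / 4 - t * a + x₀)))
        = -c ^ 2 * That ^ 3 / 48 + c * That * x₀ / 2 + x₀ ^ 2 / That := by
      have hA : ∀ t ∈ uIcc (0:ℝ) That, HasDerivAt
          (fun s => c ^ 2 * s ^ 3 / 6 - a * c * s ^ 2 + (a ^ 2 + c * x₀) * s)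
          ((c * t / 2 - a) ^ 2 + c * (c * t ^ 2 / 4 - t * a + x₀)) t := by
        intro t _
        have h1 := ((hasDerivAt_pow 3 t).const_mul (c ^ 2)).div_const 6
        have h2 := (hasDerivAt_pow 2 t).const_mul (a * c)
        have h3 := (hasDerivAt_id t).const_mul (a ^ 2 + c * x₀)
        have h5' := (h1.sub h2).add h3
        refine h5'.congr_deriv ?_
        ring
      have hcont : Continuous
          (fun t : ℝ => (c * t / 2 - a) ^ 2 + c * (c * t ^ 2 / 4 - t * a + x₀)) :=
        ((((continuous_const.mul continuous_id).div_const 2).sub continuous_const).pow 2).add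
          (continuous_const.mul ((((continuous_const.mul (continuous_pow 2)).div_const 4).sub
            (continuous_id.mul continuous_const)).add continuous_const))
      rw [integral_eq_sub_of_hasDerivAt hA (hcont.intervalIntegrable _ _)]
      rw [ha_def]; field_simp; ring
    have hI1 : (∫ t in (0:ℝ)..That, ((deriv xMQ t) ^ 2 + c * xMQ t))
        = -c ^ 2 * That ^ 3 / 48 + c * That * x₀ / 2 + x₀ ^ 2 / That := by
      rw [integral_congr_ae hG]; exact hGint
    rcases eq_or_lt_of_le hTle with hEq | hLt
    · rw [← hEq]; exact hI1
    · obtain ⟨hxg, hder⟩ := hCase2 hLt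
      have hdiff : Differentiable ℝ xMQ := fun t => (hder t).differentiableAt
      have hderiv_eq : deriv xMQ = fun t => c / 2 * (min t That - That) :=
        funext fun t => (hder t).deriv
      have hI2 : (∫ t in That..T, ((deriv xMQ t) ^ 2 + c * xMQ t)) = 0 := by
        have hz : ∀ᵐ t : ℝ, t ∈ uIoc That T →
            (deriv xMQ t) ^ 2 + c * xMQ t = (fun _ : ℝ => (0:ℝ)) t := by
          filter_upwards with t ht
          rw [uIoc_of_le hTle] at ht
          have htg : That < t := ht.1
          have hev : xMQ =ᶠ[nhds t] (fun _ => (0:ℝ)) := by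
            filter_upwards [Ioi_mem_nhds htg] with s hs
            rw [hxMQ, if_neg (not_le.mpr hs)]
          rw [hev.deriv_eq, deriv_const, hxMQ, if_neg (not_le.mpr htg)]
          ring
        rw [integral_congr_ae hz]
        simp
      have hFcont : Continuous (fun t => (deriv xMQ t) ^ 2 + c * xMQ t) := by
        rw [hderiv_eq]
        exact ((continuous_const.mul ((continuous_id.min continuous_const).sub
          continuous_const)).pow 2).add (continuous_const.mul hdiff.continuous)
      have hadj := integral_add_adjacent_intervals
        (hFcont.intervalIntegrable (μ := MeasureTheory.volume) 0 That)
        (hFcont.intervalIntegrable (μ := MeasureTheory.volume) That T)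
      rw [← hadj, hI1, hI2]; ring
  · -- terminal
    intro hlt
    constructor
    · have heq2 : That = 2 * Real.sqrt (x₀ / c) := by rw [hThat, min_eq_right hlt.le]
      rw [heq2]; exact hlt
    · intro t ht
      rw [hxMQ]
      split_ifs with h
      · have hteq : t = That := le_antisymm h ht.1
        rw [hteq]; linarith [hqThat]
      · rfl
end

section
/- Let β > 0, T > 0, and κ, σ, η, x₀, y ∈ ℝ, and set A(t) = (η x₀/(β T)) (1 − e^{−βt}). Then κ ∫₀^T ( (y e^{−βt} − A(t))² + (σ²/(2β))(1 − e^{−2βt}) ) dt = (κ y²/(2β))(1 − e^{−2βT}) + (κ σ²/(4β²))(2βT + e^{−2βT} − 1) + (κ η x₀ y/(β² T))(2 e^{−βT} − 1 − e^{−2βT}) + (κ η² x₀²/(2β³ T²))(2βT + 4 e^{−βT} − e^{−2βT} − 3). -/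
open intervalIntegral

theorem vwap_informational_cost (β T κ σ η x₀ y : ℝ) (hβ : 0 < β) (hT : 0 < T)
    (A : ℝ → ℝ) (hA : ∀ t : ℝ, A t = η * x₀ / (β * T) * (1 - Real.exp (-β * t))) :
    κ * ∫ t in (0:ℝ)..T,
        ((y * Real.exp (-β * t) - A t) ^ 2 + σ ^ 2 / (2 * β) * (1 - Real.exp (-2 * β * t)))
      = κ * y ^ 2 / (2 * β) * (1 - Real.exp (-2 * β * T))
        + κ * σ ^ 2 / (4 * β ^ 2) * (2 * β * T + Real.exp (-2 * β * T) - 1)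
        + κ * η * x₀ * y / (β ^ 2 * T) * (2 * Real.exp (-β * T) - 1 - Real.exp (-2 * β * T))
        + κ * η ^ 2 * x₀ ^ 2 / (2 * β ^ 3 * T ^ 2)
            * (2 * β * T + 4 * Real.exp (-β * T) - Real.exp (-2 * β * T) - 3) := by
  have hβ' : β ≠ 0 := ne_of_gt hβ
  have hT' : T ≠ 0 := ne_of_gt hT
  have key : ∀ c : ℝ, c ≠ 0 → ∫ t in (0:ℝ)..T, Real.exp (c * t)
      = (Real.exp (c * T) - 1) / c := by
    intro c hc
    rw [intervalIntegral.integral_comp_mul_left (fun x => Real.exp x) hc,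
      integral_exp]
    simp [smul_eq_mul, div_eq_inv_mul]
  set a : ℝ := η * x₀ / (β * T) with ha
  set s : ℝ := σ ^ 2 / (2 * β) with hs
  have hcong : ∀ t : ℝ,
      (y * Real.exp (-β * t) - A t) ^ 2 + σ ^ 2 / (2 * β) * (1 - Real.exp (-2 * β * t))
      = (a ^ 2 + s) + (-2 * a * (y + a)) * Real.exp ((-β) * t)
        + ((y + a) ^ 2 - s) * Real.exp ((-(2 * β)) * t) := by
    intro t
    rw [hA t]
    have h2 : Real.exp (-(2 * β) * t) = Real.exp (-β * t) * Real.exp (-β * t) := by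
      rw [← Real.exp_add]; ring_nf
    have h3 : Real.exp (-2 * β * t) = Real.exp (-(2*β) * t) := by ring_nf
    rw [h3, h2]
    ring
  have hInt : ∫ t in (0:ℝ)..T,
      ((y * Real.exp (-β * t) - A t) ^ 2 + σ ^ 2 / (2 * β) * (1 - Real.exp (-2 * β * t)))
      = ∫ t in (0:ℝ)..T, ((a ^ 2 + s) + (-2 * a * (y + a)) * Real.exp ((-β) * t)
        + ((y + a) ^ 2 - s) * Real.exp ((-(2 * β)) * t)) := by
    apply intervalIntegral.integral_congr
    intro t _
    exact hcong t
  rw [hInt]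
  have i1 : IntervalIntegrable (fun t => (a ^ 2 + s) + (-2 * a * (y + a)) * Real.exp ((-β) * t))
      MeasureTheory.volume 0 T :=
    (Continuous.intervalIntegrable (by fun_prop) _ _)
  have i2 : IntervalIntegrable (fun t => ((y + a) ^ 2 - s) * Real.exp ((-(2 * β)) * t))
      MeasureTheory.volume 0 T :=
    (Continuous.intervalIntegrable (by fun_prop) _ _)
  have i3 : IntervalIntegrable (fun t : ℝ => (a ^ 2 + s))
      MeasureTheory.volume 0 T :=
    (Continuous.intervalIntegrable (by fun_prop) _ _)
  have i4 : IntervalIntegrable (fun t => (-2 * a * (y + a)) * Real.exp ((-β) * t))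
      MeasureTheory.volume 0 T :=
    (Continuous.intervalIntegrable (by fun_prop) _ _)
  rw [intervalIntegral.integral_add i1 i2, intervalIntegral.integral_add i3 i4,
    intervalIntegral.integral_const, intervalIntegral.integral_const_mul,
    intervalIntegral.integral_const_mul,
    key (-β) (neg_ne_zero.mpr hβ'), key (-(2 * β)) (by simpa using hβ')]
  have e1 : Real.exp (-β * T) = Real.exp (-β * T) := rfl
  have e2 : Real.exp (-(2 * β) * T) = Real.exp (-2 * β * T) := by ring_nf
  rw [e2]
  rw [ha, hs]
  field_simp
  ring_nf
  field_simp
  ring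
end

section
/- Let σ, β, κ, c, η ∈ ℝ and let A, B, C, F : (0,∞) → ℝ be differentiable functions satisfying the Riccati system A'(T) = −A(T)² − η A(T) C(T) − (η²/4) C(T)² + c, B'(T) = −η² B(T)² − B(T)(η C(T) + 2β) + κ − (1/4) C(T)², C'(T) = −(η/2) C(T)² − C(T)(η² B(T) + A(T) + β) − 2η A(T) B(T), and F'(T) = σ² B(T). Define u(T,x,y) = x² A(T) + y² B(T) + x y C(T) + F(T). Then for all T > 0 and all x, y ∈ ℝ, u satisfies the semilinear HJB equation ∂_T u = (1/2) σ² ∂²_{yy} u − β y ∂_y u + κ y² + c x² − ( (∂_x u + η ∂_y u)/2 )², and the associated optimal feedback liquidation rate (∂_x u + η ∂_y u)/2 equals ( x (2A(T) + η C(T)) + y (C(T) + 2η B(T)) ) / 2. -/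
theorem riccati_solves_hjb (σ β κ c η : ℝ) (A B C F : ℝ → ℝ)
    (hA : ∀ T : ℝ, 0 < T →
      HasDerivAt A (-(A T) ^ 2 - η * A T * C T - η ^ 2 / 4 * (C T) ^ 2 + c) T)
    (hB : ∀ T : ℝ, 0 < T →
      HasDerivAt B (-η ^ 2 * (B T) ^ 2 - B T * (η * C T + 2 * β) + κ - 1 / 4 * (C T) ^ 2) T)
    (hC : ∀ T : ℝ, 0 < T →
      HasDerivAt C (-(η / 2) * (C T) ^ 2 - C T * (η ^ 2 * B T + A T + β) - 2 * η * A T * B T) T)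
    (hF : ∀ T : ℝ, 0 < T → HasDerivAt F (σ ^ 2 * B T) T)
    (u : ℝ → ℝ → ℝ → ℝ)
    (hu : ∀ T x y : ℝ, u T x y = x ^ 2 * A T + y ^ 2 * B T + x * y * C T + F T) :
    ∀ T : ℝ, 0 < T → ∀ x y : ℝ,
      HasDerivAt (fun T' => u T' x y)
        (1 / 2 * σ ^ 2 * deriv (fun y' => deriv (fun y'' => u T x y'') y') y
          - β * y * deriv (fun y' => u T x y') y + κ * y ^ 2 + c * x ^ 2
          - ((deriv (fun x' => u T x' y) x + η * deriv (fun y' => u T x y') y) / 2) ^ 2) T ∧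
      (deriv (fun x' => u T x' y) x + η * deriv (fun y' => u T x y') y) / 2
        = (x * (2 * A T + η * C T) + y * (C T + 2 * η * B T)) / 2 := by
  intro T hT x y
  have hdy : ∀ y0 : ℝ, HasDerivAt (fun y' => u T x y') (2 * y0 * B T + x * C T) y0 := by
    intro y0
    have h : HasDerivAt (fun y' : ℝ => x ^ 2 * A T + y' ^ 2 * B T + x * y' * C T + F T)
        (2 * y0 * B T + x * C T) y0 := by
      have h1 : HasDerivAt (fun y' : ℝ => y' ^ 2) (2 * y0) y0 := by
        simpa using hasDerivAt_pow 2 y0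
      have h2 := (((hasDerivAt_const y0 (x ^ 2 * A T)).add (h1.mul_const (B T))).add
          (((hasDerivAt_id y0).const_mul x).mul_const (C T))).add
          (hasDerivAt_const y0 (F T))
      exact h2.congr_deriv (by ring)
    exact h.congr_of_eventuallyEq (Filter.Eventually.of_forall fun y' => (hu T x y'))
  have hdyv : (fun y' => deriv (fun y'' => u T x y'') y') = fun y' => 2 * y' * B T + x * C T := by
    funext y0; exact (hdy y0).deriv
  have hdyy : deriv (fun y' => deriv (fun y'' => u T x y'') y') y = 2 * B T := by
    rw [hdyv]
    have : HasDerivAt (fun y' : ℝ => 2 * y' * B T + x * C T) (2 * B T) y := by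
      have := ((hasDerivAt_id y).const_mul 2).mul_const (B T)
      simpa using this.add_const (x * C T)
    exact this.deriv
  have hdy1 : deriv (fun y' => u T x y') y = 2 * y * B T + x * C T := (hdy y).deriv
  have hdx : deriv (fun x' => u T x' y) x = 2 * x * A T + y * C T := by
    have h : HasDerivAt (fun x' : ℝ => x' ^ 2 * A T + y ^ 2 * B T + x' * y * C T + F T)
        (2 * x * A T + y * C T) x := by
      have h1 : HasDerivAt (fun x' : ℝ => x' ^ 2) (2 * x) x := by
        simpa using hasDerivAt_pow 2 x
      have h2 := (((h1.mul_const (A T)).add (hasDerivAt_const x (y ^ 2 * B T))).add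
        (((hasDerivAt_id x).mul_const y).mul_const (C T))).add (hasDerivAt_const x (F T))
      exact h2.congr_deriv (by ring)
    exact ((h.congr_of_eventuallyEq
      (Filter.Eventually.of_forall fun x' => (hu T x' y))).deriv)
  rw [hdyy, hdy1, hdx]
  constructor
  · have hT' : HasDerivAt (fun T' => x ^ 2 * A T' + y ^ 2 * B T' + x * y * C T' + F T')
        (x ^ 2 * (-(A T) ^ 2 - η * A T * C T - η ^ 2 / 4 * (C T) ^ 2 + c)
          + y ^ 2 * (-η ^ 2 * (B T) ^ 2 - B T * (η * C T + 2 * β) + κ - 1 / 4 * (C T) ^ 2)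
          + x * y * (-(η / 2) * (C T) ^ 2 - C T * (η ^ 2 * B T + A T + β) - 2 * η * A T * B T)
          + σ ^ 2 * B T) T :=
      ((((hA T hT).const_mul (x ^ 2)).add ((hB T hT).const_mul (y ^ 2))).add
        ((hC T hT).const_mul (x * y))).add (hF T hT)
    have heq : (fun T' => u T' x y)
        = fun T' => x ^ 2 * A T' + y ^ 2 * B T' + x * y * C T' + F T' := by
      funext T'; exact hu T' x y
    rw [heq]
    convert hT' using 1
    ring
  · ring
end

section
/- Let σ, β, κ, c, η ∈ ℝ and let A, B, C, F : (0,∞) → ℝ be differentiable functions such that u(T,x,y) = x² A(T) + y² B(T) + x y C(T) + F(T) satisfies, for all T > 0 and all x, y ∈ ℝ, the semilinear HJB equation ∂_T u = (1/2) σ² ∂²_{yy} u − β y ∂_y u + κ y² + c x² − ( (∂_x u + η ∂_y u)/2 )². Then the coefficients necessarily satisfy the Riccati system A'(T) = −A(T)² − η A(T) C(T) − (η²/4) C(T)² + c, B'(T) = −η² B(T)² − B(T)(η C(T) + 2β) + κ − (1/4) C(T)², C'(T) = −(η/2) C(T)² − C(T)(η² B(T) + A(T) + β) − 2η A(T) B(T),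 and F'(T) = σ² B(T) for all T > 0. -/
theorem hjb_forces_riccati (σ β κ c η : ℝ) (A B C F : ℝ → ℝ)
    (hAdiff : ∀ T : ℝ, 0 < T → DifferentiableAt ℝ A T)
    (hBdiff : ∀ T : ℝ, 0 < T → DifferentiableAt ℝ B T)
    (hCdiff : ∀ T : ℝ, 0 < T → DifferentiableAt ℝ C T)
    (hFdiff : ∀ T : ℝ, 0 < T → DifferentiableAt ℝ F T)
    (u : ℝ → ℝ → ℝ → ℝ)
    (hu : ∀ T x y : ℝ, u T x y = x ^ 2 * A T + y ^ 2 * B T + x * y * C T + F T)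
    (hHJB : ∀ T : ℝ, 0 < T → ∀ x y : ℝ,
      HasDerivAt (fun T' => u T' x y)
        (1 / 2 * σ ^ 2 * deriv (fun y' => deriv (fun y'' => u T x y'') y') y
          - β * y * deriv (fun y' => u T x y') y + κ * y ^ 2 + c * x ^ 2
          - ((deriv (fun x' => u T x' y) x + η * deriv (fun y' => u T x y') y) / 2) ^ 2) T) :
    ∀ T : ℝ, 0 < T →
      HasDerivAt A (-(A T) ^ 2 - η * A T * C T - η ^ 2 / 4 * (C T) ^ 2 + c) T ∧
      HasDerivAt B (-η ^ 2 * (B T) ^ 2 - B T * (η * C T + 2 * β) + κ - 1 / 4 * (C T) ^ 2) T ∧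
      HasDerivAt C (-(η / 2) * (C T) ^ 2 - C T * (η ^ 2 * B T + A T + β) - 2 * η * A T * B T) T ∧
      HasDerivAt F (σ ^ 2 * B T) T := by
  intro T hT
  have hA := (hAdiff T hT).hasDerivAt
  have hB := (hBdiff T hT).hasDerivAt
  have hC := (hCdiff T hT).hasDerivAt
  have hF := (hFdiff T hT).hasDerivAt
  set A' := deriv A T with hA'
  set B' := deriv B T with hB'
  set C' := deriv C T with hC'
  set F' := deriv F T with hF'
  -- spatial derivative in y
  have hdy : ∀ x y : ℝ, deriv (fun y' => u T x y') y = 2 * y * B T + x * C T := by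
    intro x y
    have heq : (fun y' => u T x y') = fun y' => x ^ 2 * A T + y' ^ 2 * B T + x * y' * C T + F T :=
      funext fun y' => hu T x y'
    rw [heq]
    have h : HasDerivAt (fun y' : ℝ => x ^ 2 * A T + y' ^ 2 * B T + x * y' * C T + F T)
        (2 * y * B T + x * C T) y := by
      have h1 : HasDerivAt (fun y' : ℝ => y' ^ 2) (2 * y) y := by
        simpa using hasDerivAt_pow 2 y
      have h2 : HasDerivAt (fun y' : ℝ => x * y') x y := by
        simpa using (hasDerivAt_id y).const_mul x
      have := (((hasDerivAt_const y (x ^ 2 * A T)).add (h1.mul_const (B T))).add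
        (h2.mul_const (C T))).add (hasDerivAt_const y (F T))
      exact this.congr_deriv (by ring)
    exact h.deriv
  -- spatial derivative in x
  have hdx : ∀ x y : ℝ, deriv (fun x' => u T x' y) x = 2 * x * A T + y * C T := by
    intro x y
    have heq : (fun x' => u T x' y) = fun x' => x' ^ 2 * A T + y ^ 2 * B T + x' * y * C T + F T :=
      funext fun x' => hu T x' y
    rw [heq]
    have h : HasDerivAt (fun x' : ℝ => x' ^ 2 * A T + y ^ 2 * B T + x' * y * C T + F T)
        (2 * x * A T + y * C T) x := by
      have h1 : HasDerivAt (fun x' : ℝ => x' ^ 2) (2 * x) x := by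
        simpa using hasDerivAt_pow 2 x
      have h2 : HasDerivAt (fun x' : ℝ => x' * y) y x := by
        simpa using (hasDerivAt_id x).mul_const y
      have := (((h1.mul_const (A T)).add (hasDerivAt_const x (y ^ 2 * B T))).add
        (h2.mul_const (C T))).add (hasDerivAt_const x (F T))
      exact this.congr_deriv (by ring)
    exact h.deriv
  -- second derivative in y
  have hdyy : ∀ x y : ℝ, deriv (fun y' => deriv (fun y'' => u T x y'') y') y = 2 * B T := by
    intro x y
    have heq : (fun y' => deriv (fun y'' => u T x y'') y') = fun y' => 2 * y' * B T + x * C T :=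
      funext fun y' => hdy x y'
    rw [heq]
    have h : HasDerivAt (fun y' : ℝ => 2 * y' * B T + x * C T) (2 * B T) y := by
      have h2 : HasDerivAt (fun y' : ℝ => 2 * y' * B T) (2 * B T) y := by
        simpa using ((hasDerivAt_id y).const_mul 2).mul_const (B T)
      exact h2.add_const (x * C T)
    exact h.deriv
  -- time derivative
  have htime : ∀ x y : ℝ, HasDerivAt (fun T' => u T' x y)
      (x ^ 2 * A' + y ^ 2 * B' + x * y * C' + F') T := by
    intro x y
    have heq : (fun T' => u T' x y) = fun T' => x ^ 2 * A T' + y ^ 2 * B T' + x * y * C T' + F T' :=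
      funext fun T' => hu T' x y
    rw [heq]
    exact (((hA.const_mul (x ^ 2)).add (hB.const_mul (y ^ 2))).add (hC.const_mul (x * y))).add hF
  -- the matching equation
  have E : ∀ x y : ℝ, x ^ 2 * A' + y ^ 2 * B' + x * y * C' + F' =
      1 / 2 * σ ^ 2 * (2 * B T) - β * y * (2 * y * B T + x * C T) + κ * y ^ 2 + c * x ^ 2
        - ((2 * x * A T + y * C T + η * (2 * y * B T + x * C T)) / 2) ^ 2 := by
    intro x y
    have h := (htime x y).unique (hHJB T hT x y)
    rw [hdyy x y, hdy x y, hdx x y] at h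
    exact h
  have E00 := E 0 0
  have E10 := E 1 0
  have E01 := E 0 1
  have E11 := E 1 1
  have hFeq : F' = σ ^ 2 * B T := by linear_combination E00
  have hAeq : A' = -(A T) ^ 2 - η * A T * C T - η ^ 2 / 4 * (C T) ^ 2 + c := by linear_combination E10 - E00
  have hBeq : B' = -η ^ 2 * (B T) ^ 2 - B T * (η * C T + 2 * β) + κ - 1 / 4 * (C T) ^ 2 := by
    linear_combination E01 - E00
  have hCeq : C' = -(η / 2) * (C T) ^ 2 - C T * (η ^ 2 * B T + A T + β) - 2 * η * A T * B T := by
    linear_combination E11 - E10 - E01 + E00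
  exact ⟨hAeq ▸ hA, hBeq ▸ hB, hCeq ▸ hC, hFeq ▸ hF⟩
end
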